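/- For m×n nonnegative integer matrices M and N, the lexicographic expression of the product x^M x^N in R^{(t)} is x^M x^N = q^α x^{M+N} + Σ_L α_L x^L for some integer α and scalars α_L ∈ K, where every L with α_L ≠ 0 satisfies L ≺ M+N in the matrix lexicographic order. Consequently, if x^M divides x^N, then x^N = q^α x^M x^{N−M} + Σ_L α_L x^L with every such L ≺ N. -/

import Mathlib

noncomputable section

namespace QM

/-- 1-indexed rank of a coordinate of `[m] × [n]` in the lexicographic order. -/
def idx {m n : ℕ} (p : Fin m × Fin n) : ℕ := p.1.1 * n + p.2.1 + 1

/-- `q` is not a root of unity. -/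
def NotRootOfUnity {K : Type*} [Field K] (q : K) : Prop := ∀ k : ℕ, 0 < k → q ^ k ≠ 1

/-- `B` is (the set of black squares of) a Cauchon diagram. -/
def IsCauchon {m n : ℕ} (B : Set (Fin m × Fin n)) : Prop :=
  ∀ p ∈ B, (∀ j' : Fin n, j' < p.2 → (p.1, j') ∈ B) ∨ (∀ i' : Fin m, i' < p.1 → (i', p.2) ∈ B)

/-! ### The quantum torus, presented by generators and relations -/

/-- Generators of the quantum torus: a generator `t_{i,j}` and its inverse for each coordinate. -/
inductive TGen (m n : ℕ) : Type
  | pos : Fin m → Fin n → TGen m n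
  | neg : Fin m → Fin n → TGen m n

variable (K : Type*) [Field K]

def Tp (m n : ℕ) (i : Fin m) (j : Fin n) : FreeAlgebra K (TGen m n) :=
  FreeAlgebra.ι K (TGen.pos i j)

def Tm (m n : ℕ) (i : Fin m) (j : Fin n) : FreeAlgebra K (TGen m n) :=
  FreeAlgebra.ι K (TGen.neg i j)

/-- The defining relations of the `m × n` quantum torus. -/
inductive TorusRel (m n : ℕ) (q : K) :
    FreeAlgebra K (TGen m n) → FreeAlgebra K (TGen m n) → Prop
  | mulInv : ∀ (i : Fin m) (j : Fin n), TorusRel m n q (Tp K m n i j * Tm K m n i j) 1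
  | invMul : ∀ (i : Fin m) (j : Fin n), TorusRel m n q (Tm K m n i j * Tp K m n i j) 1
  | rowRel : ∀ {i : Fin m} {j l : Fin n}, j < l →
      TorusRel m n q (Tp K m n i j * Tp K m n i l) (q • (Tp K m n i l * Tp K m n i j))
  | colRel : ∀ {i k : Fin m} {j : Fin n}, i < k →
      TorusRel m n q (Tp K m n i j * Tp K m n k j) (q • (Tp K m n k j * Tp K m n i j))
  | commRel : ∀ {i k : Fin m} {j l : Fin n}, i ≠ k → j ≠ l →
      TorusRel m n q (Tp K m n i j * Tp K m n k l) (Tp K m n k l * Tp K m n i j)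

/-- The `m × n` quantum torus `O_q((K^*)^{m×n})`. -/
abbrev QTorus (m n : ℕ) (q : K) := RingQuot (TorusRel K m n q)

/-- The generator `t_{i,j}` of the quantum torus. -/
def tq (m n : ℕ) (q : K) (i : Fin m) (j : Fin n) : QTorus K m n q :=
  RingQuot.mkAlgHom K (TorusRel K m n q) (Tp K m n i j)

/-- The inverse generator `t_{i,j}⁻¹` of the quantum torus. -/
def tqi (m n : ℕ) (q : K) (i : Fin m) (j : Fin n) : QTorus K m n q :=
  RingQuot.mkAlgHom K (TorusRel K m n q) (Tm K m n i j)

/-- The list of all coordinates of `[m] × [n]` in increasing lexicographic order. -/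
def coordList (m n : ℕ) : List (Fin m × Fin n) :=
  (List.finRange m).flatMap fun i => (List.finRange n).map fun j => (i, j)

/-- `t_{i,j}^z` for an integer `z`. -/
def tzpow (m n : ℕ) (q : K) (i : Fin m) (j : Fin n) (z : ℤ) : QTorus K m n q :=
  if 0 ≤ z then tq K m n q i j ^ z.toNat else tqi K m n q i j ^ (-z).toNat

/-- The lexicographic term `t^N` of the quantum torus, `N` an integer matrix. -/
def tpow (m n : ℕ) (q : K) (N : Matrix (Fin m) (Fin n) ℤ) : QTorus K m n q :=
  ((coordList m n).map fun p => tzpow K m n q p.1 p.2 (N p.1 p.2)).prod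

/-! ### Cauchon graphs and paths -/

/-- Vertices of a Cauchon graph: white vertices, row vertices and column vertices. -/
inductive V (m n : ℕ) : Type
  | white : Fin m → Fin n → V m n
  | row : Fin m → V m n
  | col : Fin n → V m n
deriving DecidableEq

/-- Directed edges of the Cauchon graph `G_B^{m×n}`. -/
inductive Edge {m n : ℕ} (B : Set (Fin m × Fin n)) : V m n → V m n → Prop
  | horiz : ∀ {i : Fin m} {j j' : Fin n}, j' < j → (i, j) ∉ B → (i, j') ∉ B →
      (∀ j'' : Fin n, j' < j'' → j'' < j → (i, j'') ∈ B) →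
      Edge B (V.white i j) (V.white i j')
  | vert : ∀ {i i' : Fin m} {j : Fin n}, i < i' → (i, j) ∉ B → (i', j) ∉ B →
      (∀ i'' : Fin m, i < i'' → i'' < i' → (i'', j) ∈ B) →
      Edge B (V.white i j) (V.white i' j)
  | fromRow : ∀ {i : Fin m} {j : Fin n}, (i, j) ∉ B →
      (∀ j' : Fin n, j < j' → (i, j') ∈ B) → Edge B (V.row i) (V.white i j)
  | toCol : ∀ {i : Fin m} {j : Fin n}, (i, j) ∉ B →
      (∀ i' : Fin m, i < i' → (i', j) ∈ B) → Edge B (V.white i j) (V.col j)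

/-- The weight of an edge of a Cauchon graph, as an element of the quantum torus. -/
def ew (m n : ℕ) (q : K) : V m n → V m n → QTorus K m n q
  | V.white i j, V.white i' j' => if i = i' then tqi K m n q i j * tq K m n q i j' else 1
  | V.row _, V.white i j => tq K m n q i j
  | _, _ => 1

/-- The weight of a list of vertices: ordered product of the weights of consecutive edges. -/
def wtList (m n : ℕ) (q : K) : List (V m n) → QTorus K m n q
  | [] => 1
  | [_] => 1
  | a :: b :: rest => ew K m n q a b * wtList m n q (b :: rest)

/-- A (directed, vertex-disjoint) path in the Cauchon graph `G_B^{m×n}`. -/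
structure CPath (m n : ℕ) (B : Set (Fin m × Fin n)) : Type where
  verts : List (V m n)
  nonempty : verts ≠ []
  chain : verts.Chain' (Edge B)
  nodup : verts.Nodup

/-- The starting vertex of a path. -/
def CPath.first {m n : ℕ} {B : Set (Fin m × Fin n)} (P : CPath m n B) : V m n :=
  P.verts.head P.nonempty

/-- The ending vertex of a path. -/
def CPath.last {m n : ℕ} {B : Set (Fin m × Fin n)} (P : CPath m n B) : V m n :=
  P.verts.getLast P.nonempty

/-- The weight `w(P)` of a path. -/
def CPath.wt {m n : ℕ} (q : K) {B : Set (Fin m × Fin n)} (P : CPath m n B) : QTorus K m n q :=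
  wtList K m n q P.verts

/-- Whether an (oriented) edge between these two vertices is vertical. -/
def isVertV {m n : ℕ} : V m n → V m n → Bool
  | V.white _ j, V.white _ j' => j == j'
  | V.white _ _, V.col _ => true
  | _, _ => false

/-- Whether an (oriented) edge between these two vertices is horizontal. -/
def isHorizV {m n : ℕ} : V m n → V m n → Bool
  | V.white i _, V.white i' _ => i == i'
  | V.row _, V.white _ _ => true
  | _, _ => false

/-- The vertex list `L` has a `⌐`-turn (Le-turn) at the white vertex `(a,b)`:
it enters `(a,b)` by a vertical edge and leaves it by a horizontal edge. -/
def HasLeTurnAt {m n : ℕ} (L : List (V m n)) (a : Fin m) (b : Fin n) : Prop :=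
  ∃ u w : V m n, List.IsInfix [u, V.white a b, w] L ∧
    isVertV u (V.white a b) = true ∧ isHorizV (V.white a b) w = true

/-- `Γ_B^{(t)}(i,j)`: the paths from row vertex `i` to column vertex `j` with no `⌐`-turn at a
white vertex larger than the `t`-th smallest coordinate. -/
def Gamma {m n : ℕ} (B : Set (Fin m × Fin n)) (t : ℕ) (i : Fin m) (j : Fin n) :
    Set (CPath m n B) :=
  {P | P.first = V.row i ∧ P.last = V.col j ∧
    ∀ (a : Fin m) (b : Fin n), t < idx (a, b) → ¬ HasLeTurnAt P.verts a b}

/-- The generator `x_{i,j}` of `A_B^{(t)}`: the sum of the weights of all paths in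
`Γ_B^{(t)}(i,j)`. -/
def XB (m n : ℕ) (q : K) (B : Set (Fin m × Fin n)) (t : ℕ) (i : Fin m) (j : Fin n) :
    QTorus K m n q :=
  ∑ᶠ P ∈ Gamma B t i j, CPath.wt K q P

/-- The subalgebra `A_B^{(t)}` of the quantum torus. -/
def ABalg (m n : ℕ) (q : K) (B : Set (Fin m × Fin n)) (t : ℕ) : Subalgebra K (QTorus K m n q) :=
  Algebra.adjoin K (Set.range fun p : Fin m × Fin n => XB K m n q B t p.1 p.2)

/-- The localization `A_B^{(t)}[x_{r,s}^{-1}]`, realized inside the quantum torus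
(note `x_{r,s} = t_{r,s}`). -/
def ABlocAlg (m n : ℕ) (q : K) (B : Set (Fin m × Fin n)) (t : ℕ) (r : Fin m) (s : Fin n) :
    Subalgebra K (QTorus K m n q) :=
  Algebra.adjoin K
    (Set.range (fun p : Fin m × Fin n => XB K m n q B t p.1 p.2) ∪ {tqi K m n q r s})

/-- A family of paths is pairwise vertex-disjoint. -/
def SysDisjoint {m n : ℕ} {B : Set (Fin m × Fin n)} {k : ℕ} (P : Fin k → CPath m n B) : Prop :=
  ∀ a b : Fin k, a ≠ b → ∀ v ∈ (P a).verts, v ∉ (P b).verts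

/-- `Γ_B^{(t)}(I|J)`: vertex-disjoint path systems from the row vertices `I` to the column
vertices `J`. -/
def GammaSys {m n : ℕ} (B : Set (Fin m × Fin n)) (t k : ℕ) (I : Fin k → Fin m)
    (J : Fin k → Fin n) : Set (Fin k → CPath m n B) :=
  {P | (∀ a, P a ∈ Gamma B t (I a) (J a)) ∧ SysDisjoint P}

/-- The weight of a path system: the ordered product of the weights of its paths. -/
def sysWt {m n : ℕ} (q : K) {B : Set (Fin m × Fin n)} {k : ℕ} (P : Fin k → CPath m n B) :
    QTorus K m n q :=
  ((List.finRange k).map fun a => CPath.wt K q (P a)).prod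

/-- The number of inversions of a permutation of `Fin k`. -/
def inversions {k : ℕ} (σ : Equiv.Perm (Fin k)) : ℕ :=
  (Finset.univ.filter fun p : Fin k × Fin k => p.1 < p.2 ∧ σ p.2 < σ p.1).card

/-- The quantum minor `[I|J]_B^{(t)}` of `A_B^{(t)}`, as an element of the quantum torus. -/
def qminor (m n : ℕ) (q : K) (B : Set (Fin m × Fin n)) (t : ℕ) (k : ℕ)
    (I : Fin k → Fin m) (J : Fin k → Fin n) : QTorus K m n q :=
  ∑ σ : Equiv.Perm (Fin k),
    ((-q) ^ inversions σ) • ((List.finRange k).map fun a => XB K m n q B t (I a) (J (σ a))).prod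

/-! ### The algebras `R^{(t)}`, presented by generators and relations -/

def xf (m n : ℕ) (p : Fin m × Fin n) : FreeAlgebra K (Fin m × Fin n) := FreeAlgebra.ι K p

/-- The defining relations of the algebra `R^{(t)}`. -/
inductive RRel (m n : ℕ) (q : K) (t : ℕ) :
    FreeAlgebra K (Fin m × Fin n) → FreeAlgebra K (Fin m × Fin n) → Prop
  | rowRel : ∀ {i : Fin m} {j l : Fin n}, j < l →
      RRel m n q t (xf K m n (i, j) * xf K m n (i, l)) (q • (xf K m n (i, l) * xf K m n (i, j)))
  | colRel : ∀ {i k : Fin m} {j : Fin n}, i < k →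
      RRel m n q t (xf K m n (i, j) * xf K m n (k, j)) (q • (xf K m n (k, j) * xf K m n (i, j)))
  | antiDiag : ∀ {i k : Fin m} {j l : Fin n}, i < k → j < l →
      RRel m n q t (xf K m n (i, l) * xf K m n (k, j)) (xf K m n (k, j) * xf K m n (i, l))
  | diagComm : ∀ {i k : Fin m} {j l : Fin n}, i < k → j < l → t < idx (k, l) →
      RRel m n q t (xf K m n (i, j) * xf K m n (k, l)) (xf K m n (k, l) * xf K m n (i, j))
  | diagQ : ∀ {i k : Fin m} {j l : Fin n}, i < k → j < l → idx (k, l) ≤ t →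
      RRel m n q t (xf K m n (i, j) * xf K m n (k, l))
        (xf K m n (k, l) * xf K m n (i, j) + (q - q⁻¹) • (xf K m n (i, l) * xf K m n (k, j)))

/-- The algebra `R^{(t)}` (`R^{(1)}` is quantum affine space, `R^{(mn)}` is quantum matrices). -/
abbrev Rt (m n : ℕ) (q : K) (t : ℕ) := RingQuot (RRel K m n q t)

/-- The standard generator `x_{i,j}` of `R^{(t)}`. -/
def rx (m n : ℕ) (q : K) (t : ℕ) (i : Fin m) (j : Fin n) : Rt K m n q t :=
  RingQuot.mkAlgHom K (RRel K m n q t) (xf K m n (i, j))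

/-- The lexicographic term `x^M` of `R^{(t)}`. -/
def rxpow (m n : ℕ) (q : K) (t : ℕ) (M : Matrix (Fin m) (Fin n) ℕ) : Rt K m n q t :=
  ((coordList m n).map fun p => rx K m n q t p.1 p.2 ^ M p.1 p.2).prod

/-- The quantum minor `[I|J]^{(t)}` of `R^{(t)} ≅ A^{(t)}`. -/
def rminor (m n : ℕ) (q : K) (t : ℕ) (k : ℕ) (I : Fin k → Fin m) (J : Fin k → Fin n) :
    Rt K m n q t :=
  ∑ σ : Equiv.Perm (Fin k),
    ((-q) ^ inversions σ) • ((List.finRange k).map fun a => rx K m n q t (I a) (J (σ a))).prod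

/-- The diagonal subminor of the minor indexed by `(I, J)` determined by a subset `s` of the
index set. -/
def minorOfFinset (m n : ℕ) (q : K) (t : ℕ) {k : ℕ} (I : Fin k → Fin m) (J : Fin k → Fin n)
    (s : Finset (Fin k)) : Rt K m n q t :=
  rminor K m n q t s.card (fun a => ((s.orderIsoOfFin rfl a : s) : Fin k) |> I)
    (fun a => ((s.orderIsoOfFin rfl a : s) : Fin k) |> J)

/-! ### The matrix lexicographic order, lexicographic expressions, leading terms -/

/-- `M ≺ N` at the coordinate `p` (matrix lexicographic order): the entries agree at all
coordinates before `p` and `M p < N p`. -/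
def MLexLtAt {m n : ℕ} {R : Type*} [LT R] (M N : Matrix (Fin m) (Fin n) R)
    (p : Fin m × Fin n) : Prop :=
  M p.1 p.2 < N p.1 p.2 ∧ ∀ p' : Fin m × Fin n, idx p' < idx p → M p'.1 p'.2 = N p'.1 p'.2

/-- The matrix lexicographic order `M ≺ N`. -/
def MLexLt {m n : ℕ} {R : Type*} [LT R] (M N : Matrix (Fin m) (Fin n) R) : Prop :=
  ∃ p : Fin m × Fin n, MLexLtAt M N p

/-- `c` is the (unique) lexicographic expression of `a ∈ R^{(t)}`. -/
def IsLexRep (m n : ℕ) (q : K) (t : ℕ) (a : Rt K m n q t)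
    (c : Matrix (Fin m) (Fin n) ℕ →₀ K) : Prop :=
  a = c.sum fun N r => r • rxpow K m n q t N

/-- `x^M` is the leading term of `a ∈ R^{(t)}` with respect to the matrix lexicographic order. -/
def IsLeadMat (m n : ℕ) (q : K) (t : ℕ) (a : Rt K m n q t)
    (M : Matrix (Fin m) (Fin n) ℕ) : Prop :=
  ∃ c, IsLexRep K m n q t a c ∧ M ∈ c.support ∧ ∀ L ∈ c.support, L ≠ M → MLexLt L M

/-- The permutation matrix `P_σ` associated to index sets `(I, J)` and a permutation `σ`. -/
def permMat {m n k : ℕ} (I : Fin k → Fin m) (J : Fin k → Fin n) (σ : Equiv.Perm (Fin k)) :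
    Matrix (Fin m) (Fin n) ℕ :=
  fun i j => (Finset.univ.filter fun a : Fin k => I a = i ∧ J (σ a) = j).card

/-- The elementary matrix `E_{i,j}`. -/
def Emat {m n : ℕ} (i : Fin m) (j : Fin n) : Matrix (Fin m) (Fin n) ℕ :=
  fun i' j' => if i' = i ∧ j' = j then 1 else 0

/-- The lexicographic term `x^N` formed from the generators of `A_B^{(t)}` in the
quantum torus. -/
def xTermQ (m n : ℕ) (q : K) (B : Set (Fin m × Fin n)) (t : ℕ)
    (N : Matrix (Fin m) (Fin n) ℕ) : QTorus K m n q :=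
  ((coordList m n).map fun p => XB K m n q B t p.1 p.2 ^ N p.1 p.2).prod

/-- `c` is the lexicographic expression of `a` in terms of the generators of `A_B^{(t)}`. -/
def IsXRep (m n : ℕ) (q : K) (B : Set (Fin m × Fin n)) (t : ℕ) (a : QTorus K m n q)
    (c : Matrix (Fin m) (Fin n) ℕ →₀ K) : Prop :=
  a = c.sum fun N r => r • xTermQ K m n q B t N

/-- The lexicographic term `y^N` of the localization `A_B^{(t')}[y_{r,s}^{-1}]`, where the
`(r,s)` entry of `N` may be negative. -/
def LocTerm (m n : ℕ) (q : K) (B : Set (Fin m × Fin n)) (t' : ℕ) (r : Fin m) (s : Fin n)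
    (N : Matrix (Fin m) (Fin n) ℤ) : QTorus K m n q :=
  ((coordList m n).map fun p =>
    if p = (r, s) then
      (if 0 ≤ N r s then XB K m n q B t' r s ^ (N r s).toNat
        else tqi K m n q r s ^ (-(N r s)).toNat)
    else XB K m n q B t' p.1 p.2 ^ (N p.1 p.2).toNat).prod

/-- `c` is the lexicographic expression of `a` in the localization `A_B^{(t')}[y_{r,s}^{-1}]`. -/
def IsLocRep (m n : ℕ) (q : K) (B : Set (Fin m × Fin n)) (t' : ℕ) (r : Fin m) (s : Fin n)
    (a : QTorus K m n q) (c : Matrix (Fin m) (Fin n) ℤ →₀ K) : Prop :=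
  (∀ N ∈ c.support, ∀ p : Fin m × Fin n, p ≠ (r, s) → 0 ≤ N p.1 p.2) ∧
  a = c.sum fun N α => α • LocTerm K m n q B t' r s N

/-! ### The path `U(P,Q)` -/

/-- Auxiliary function computing the vertex list of `U(P,Q)`: between consecutive common
vertices of `P` and `Q`, follow whichever subpath is above the other. -/
def upperAux {m n : ℕ} : ℕ → List (V m n) → List (V m n) → List (V m n)
  | 0, _, _ => []
  | _ + 1, [], _ => []
  | _ + 1, _, [] => []
  | fuel + 1, p :: ps, q :: qs =>
    match ps.filter (fun v => qs.contains v) with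
    | [] => [p]
    | v :: _ =>
      (if isHorizV p (ps.headD p) then p :: ps.takeWhile (fun x => x != v)
        else q :: qs.takeWhile (fun x => x != v)) ++
        upperAux fuel (ps.dropWhile fun x => x != v) (qs.dropWhile fun x => x != v)

/-- The vertex list of the path `U(P,Q)`. -/
def upperList {m n : ℕ} {B : Set (Fin m × Fin n)} (P Q : CPath m n B) : List (V m n) :=
  upperAux (P.verts.length + Q.verts.length) P.verts Q.verts


/-! ### Auxiliary material for Statement 12 -/

section Stmt12Aux

variable {m n : ℕ}

lemma idx_mk (i : Fin m) (j : Fin n) : idx (i, j) = i.1 * n + j.1 + 1 := rfl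

lemma idx_lt_idx {i k : Fin m} {j l : Fin n} :
    idx (i, j) < idx (k, l) ↔ i.1 < k.1 ∨ (i.1 = k.1 ∧ j.1 < l.1) := by
  rw [idx_mk, idx_mk]
  constructor
  · intro h
    rcases Nat.lt_trichotomy i.1 k.1 with h1 | h1 | h1
    · exact Or.inl h1
    · right; refine ⟨h1, ?_⟩; rw [h1] at h; omega
    · exfalso
      have hk : k.1 * n + n ≤ i.1 * n := by
        have := Nat.mul_le_mul_right n (show k.1 + 1 ≤ i.1 by omega)
        simpa [Nat.succ_mul] using this
      have hj := j.2
      have hl := l.2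
      omega
  · intro h
    rcases h with h | ⟨h1, h2⟩
    · have hk : i.1 * n + n ≤ k.1 * n := by
        have := Nat.mul_le_mul_right n (show i.1 + 1 ≤ k.1 by omega)
        simpa [Nat.succ_mul] using this
      have hj := j.2
      omega
    · rw [h1]; omega

lemma idx_inj {p p' : Fin m × Fin n} (h : idx p = idx p') : p = p' := by
  obtain ⟨i, j⟩ := p
  obtain ⟨k, l⟩ := p'
  rw [idx_mk, idx_mk] at h
  rcases Nat.lt_trichotomy i.1 k.1 with h1 | h1 | h1
  · have := idx_lt_idx.mpr (Or.inl h1 : i.1 < k.1 ∨ (i.1 = k.1 ∧ j.1 < l.1))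
    rw [idx_mk, idx_mk] at this; omega
  · rcases Nat.lt_trichotomy j.1 l.1 with h2 | h2 | h2
    · have := idx_lt_idx.mpr (Or.inr ⟨h1, h2⟩ : i.1 < k.1 ∨ (i.1 = k.1 ∧ j.1 < l.1))
      rw [idx_mk, idx_mk] at this; omega
    · exact Prod.ext (Fin.val_injective h1) (Fin.val_injective h2)
    · have := idx_lt_idx.mpr (Or.inr ⟨h1.symm, h2⟩ : k.1 < i.1 ∨ (k.1 = i.1 ∧ l.1 < j.1))
      rw [idx_mk, idx_mk] at this; omega
  · have := idx_lt_idx.mpr (Or.inl h1 : k.1 < i.1 ∨ (k.1 = i.1 ∧ l.1 < j.1))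
    rw [idx_mk, idx_mk] at this; omega

lemma idx_le_mul (p : Fin m × Fin n) : idx p ≤ m * n := by
  obtain ⟨i, j⟩ := p
  have hj := j.2
  have h1 : (i.1 + 1) * n ≤ m * n := Nat.mul_le_mul_right n (by omega)
  rw [idx_mk]
  rw [Nat.succ_mul] at h1
  omega

/-- Transitivity of the matrix lexicographic order. -/
lemma MLexLt_trans {M N P : Matrix (Fin m) (Fin n) ℕ}
    (h1 : MLexLt M N) (h2 : MLexLt N P) : MLexLt M P := by
  obtain ⟨p, hp1, hp2⟩ := h1
  obtain ⟨p', hp1', hp2'⟩ := h2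
  rcases Nat.lt_trichotomy (idx p) (idx p') with h | h | h
  · exact ⟨p, by rw [← hp2' p h]; exact hp1, fun r hr => by rw [hp2 r hr, hp2' r (lt_trans hr h)]⟩
  · have hpp : p = p' := idx_inj h
    subst hpp
    exact ⟨p, lt_trans hp1 hp1', fun r hr => (hp2 r hr).trans (hp2' r hr)⟩
  · exact ⟨p', by rw [hp2 p' h]; exact hp1', fun r hr => (hp2 r (lt_trans hr h)).trans (hp2' r hr)⟩

/-! #### Lists of coordinates -/

instance : IsTrans (Fin m × Fin n) (fun p p' => idx p ≤ idx p') :=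
  ⟨fun _ _ _ h h' => le_trans h h'⟩

instance : IsAntisymm (Fin m × Fin n) (fun p p' => idx p ≤ idx p') :=
  ⟨fun _ _ h h' => idx_inj (le_antisymm h h')⟩

lemma coordList_pairwise : (coordList m n).Pairwise (fun p q => idx p < idx q) := by
  unfold coordList
  rw [List.pairwise_flatMap]
  constructor
  · intro i _
    rw [List.pairwise_map]
    exact (List.pairwise_lt_finRange n).imp
      (fun h => idx_lt_idx.mpr (Or.inr ⟨rfl, h⟩))
  · refine (List.pairwise_lt_finRange m).imp ?_
    intro i i' h x hx y hy
    obtain ⟨j, _, rfl⟩ := List.mem_map.mp hx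
    obtain ⟨j', _, rfl⟩ := List.mem_map.mp hy
    exact idx_lt_idx.mpr (Or.inl h)

lemma coordList_nodup : (coordList m n).Nodup :=
  coordList_pairwise.imp (fun h => by rintro rfl; exact absurd h (lt_irrefl _))

lemma coordList_mem (p : Fin m × Fin n) : p ∈ coordList m n := by
  obtain ⟨i, j⟩ := p
  unfold coordList
  rw [List.mem_flatMap]
  exact ⟨i, List.mem_finRange i, List.mem_map.mpr ⟨j, List.mem_finRange j, rfl⟩⟩

/-- The matrix of exponents of a word. -/
def matW (w : List (Fin m × Fin n)) : Matrix (Fin m) (Fin n) ℕ :=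
  fun i j => w.count (i, j)

/-- The canonical (sorted) word of a matrix of exponents. -/
def wordOf (M : Matrix (Fin m) (Fin n) ℕ) : List (Fin m × Fin n) :=
  (coordList m n).flatMap fun p => List.replicate (M p.1 p.2) p

lemma sum_ite_eq_of_nodup (f : Fin m × Fin n → ℕ) :
    ∀ (l : List (Fin m × Fin n)), l.Nodup → ∀ p ∈ l,
      (l.map fun q => if q = p then f q else 0).sum = f p
  | [], _, p, hp => by simp at hp
  | a :: l, hnd, p, hp => by
    simp only [List.map_cons, List.sum_cons]
    rcases List.mem_cons.mp hp with rfl | hp'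
    · have hz : ∀ x ∈ l.map fun q => if q = p then f q else 0, x = 0 := by
        intro x hx
        obtain ⟨q, hq, rfl⟩ := List.mem_map.mp hx
        have hqp : q ≠ p := by rintro rfl; exact (List.nodup_cons.mp hnd).1 hq
        simp [hqp]
      rw [List.sum_eq_zero hz]
      simp
    · have hap : a ≠ p := by rintro rfl; exact (List.nodup_cons.mp hnd).1 hp'
      rw [sum_ite_eq_of_nodup f l (List.nodup_cons.mp hnd).2 p hp']
      simp [hap]

lemma count_wordOf (M : Matrix (Fin m) (Fin n) ℕ) (p : Fin m × Fin n) :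
    (wordOf M).count p = M p.1 p.2 := by
  rw [wordOf, List.count_flatMap]
  have hmap : (List.map (List.count p ∘ fun q => List.replicate (M q.1 q.2) q) (coordList m n))
      = (coordList m n).map (fun q => if q = p then M q.1 q.2 else 0) := by
    apply List.map_congr_left
    intro q _
    simp only [Function.comp_apply, List.count_replicate]
    by_cases hqp : q = p <;> simp [hqp]
  rw [hmap, sum_ite_eq_of_nodup _ _ coordList_nodup p (coordList_mem p)]

lemma wordOf_sorted (M : Matrix (Fin m) (Fin n) ℕ) :
    (wordOf M).Pairwise (fun p p' => idx p ≤ idx p') := by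
  rw [wordOf, List.pairwise_flatMap]
  constructor
  · intro p _
    exact List.pairwise_replicate.mpr (Or.inr (le_refl _))
  · refine coordList_pairwise.imp ?_
    intro p q h x hx y hy
    rw [List.eq_of_mem_replicate hx, List.eq_of_mem_replicate hy]
    exact le_of_lt h


lemma count_inst_eq {α : Type*} (i1 i2 : BEq α) (h1 : @LawfulBEq α i1) (h2 : @LawfulBEq α i2)
    (p : α) : ∀ (w : List α), @List.count α i1 p w = @List.count α i2 p w
  | [] => rfl
  | a :: w => by
    rw [@List.count_cons α i1, @List.count_cons α i2, count_inst_eq i1 i2 h1 h2 p w]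
    by_cases hap : a = p
    · subst hap
      rw [@beq_self_eq_true α i1 h1.toReflBEq, @beq_self_eq_true α i2 h2.toReflBEq]
    · rw [show (@BEq.beq α i1 a p) = false by exact (@beq_eq_false_iff_ne α i1 h1 a p).mpr hap,
        show (@BEq.beq α i2 a p) = false by exact (@beq_eq_false_iff_ne α i2 h2 a p).mpr hap]

lemma lawful_of_de {α : Type*} (de : DecidableEq α) :
    @LawfulBEq α (@instBEqOfDecidableEq α de) := by
  constructor
  · intro a b h
    simpa [instBEqOfDecidableEq, decide_eq_true_eq] using h

lemma perm_of_count_eq {α : Type*} [de : DecidableEq α] [ib : BEq α] [lb : @LawfulBEq α ib]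
    {w₁ w₂ : List α} (h : ∀ p, @List.count α ib p w₁ = @List.count α ib p w₂) : w₁.Perm w₂ := by
  refine List.perm_iff_count.mpr (fun p => ?_)
  exact h p

lemma sorted_eq_wordOf {w : List (Fin m × Fin n)}
    (hs : w.Pairwise (fun p p' => idx p ≤ idx p')) : w = wordOf (matW w) := by
  refine List.Perm.eq_of_pairwise' hs (wordOf_sorted _) ?_
  refine perm_of_count_eq (fun p => ?_)
  rw [count_wordOf]
  rfl

/-! #### Inversions of a word -/

/-- Number of inversions of a list of naturals. -/
def invN : List ℕ → ℕ
  | [] => 0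
  | a :: l => (l.countP fun x => decide (x < a)) + invN l

lemma invN_append (U S : List ℕ) :
    invN (U ++ S) = invN U + (U.map fun a => S.countP fun z => decide (z < a)).sum + invN S := by
  induction U with
  | nil => simp [invN]
  | cons a U ih =>
    simp only [List.cons_append, invN, List.countP_append, List.append_eq, List.map_cons, List.sum_cons, ih]
    ring

lemma invN_swap {x y : ℕ} (h : y < x) (U V : List ℕ) :
    invN (U ++ y :: x :: V) < invN (U ++ x :: y :: V) := by
  rw [invN_append, invN_append]
  have hmap : (U.map fun a => ((y :: x :: V).countP fun z => decide (z < a)))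
      = (U.map fun a => ((x :: y :: V).countP fun z => decide (z < a))) := by
    apply List.map_congr_left
    intro a _
    simp only [List.countP_cons]
    ring
  rw [hmap]
  have h1 : invN (y :: x :: V) + 1 = invN (x :: y :: V) := by
    have hxy : ¬ (x < y) := by omega
    have e1 : (decide (y < x)) = true := decide_eq_true h
    have e2 : (decide (x < y)) = false := decide_eq_false hxy
    simp only [invN, List.countP_cons, e1, e2]
    simp only [if_true, Bool.false_eq_true, if_false]
    omega
  omega

lemma invN_le_sq : ∀ l : List ℕ, invN l ≤ l.length ^ 2
  | [] => by simp [invN]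
  | a :: l => by
    have h1 := List.countP_le_length (p := fun x => decide (x < a)) (l := l)
    have h2 := invN_le_sq l
    simp only [invN, List.length_cons]
    nlinarith

/-! #### An ℕ-valued code for the matrix lexicographic order -/

/-- Base-`B` code of a matrix, compatible with the matrix lexicographic order. -/
def codeM (B : ℕ) (M : Matrix (Fin m) (Fin n) ℕ) : ℕ :=
  ∑ p : Fin m × Fin n, M p.1 p.2 * B ^ (m * n - idx p)

lemma geom_aux (b : ℕ) : ∀ E : ℕ, b * (∑ e ∈ Finset.range E, (b + 1) ^ e) + 1 = (b + 1) ^ E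
  | 0 => by simp
  | E + 1 => by
    rw [Finset.sum_range_succ, pow_succ, ← geom_aux b E]
    ring

set_option maxHeartbeats 1000000 in
lemma codeM_lt {B : ℕ} {M N : Matrix (Fin m) (Fin n) ℕ}
    (hM : ∀ p : Fin m × Fin n, M p.1 p.2 < B)
    (h : MLexLt M N) : codeM B M < codeM B N := by
  obtain ⟨p₀, h1, h2⟩ := h
  obtain ⟨b, rfl⟩ : ∃ b, B = b + 1 := ⟨B - 1, by have := hM p₀; omega⟩
  set s₁ := Finset.univ.filter (fun p : Fin m × Fin n => idx p < idx p₀) with hs₁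
  set s₃ := Finset.univ.filter (fun p : Fin m × Fin n => idx p₀ < idx p) with hs₃
  have hsplit : ∀ (P : Matrix (Fin m) (Fin n) ℕ), codeM (b + 1) P =
      (∑ p ∈ s₁, P p.1 p.2 * (b + 1) ^ (m * n - idx p)) + P p₀.1 p₀.2 * (b + 1) ^ (m * n - idx p₀) + ∑ p ∈ s₃, P p.1 p.2 * (b + 1) ^ (m * n - idx p) := by
    intro P
    have d1 : Disjoint s₁ ({p₀} : Finset (Fin m × Fin n)) := by
      rw [Finset.disjoint_left]
      intro p hp hp'
      rw [hs₁, Finset.mem_filter] at hp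
      rw [Finset.mem_singleton] at hp'
      subst hp'
      exact absurd hp.2 (lt_irrefl _)
    have d2 : Disjoint (s₁ ∪ {p₀}) s₃ := by
      rw [Finset.disjoint_left]
      intro p hp hp'
      rw [hs₃, Finset.mem_filter] at hp'
      rcases Finset.mem_union.mp hp with hp | hp
      · rw [hs₁, Finset.mem_filter] at hp
        omega
      · rw [Finset.mem_singleton] at hp
        subst hp
        exact absurd hp'.2 (lt_irrefl _)
    have hu : Finset.univ = (s₁ ∪ {p₀}) ∪ s₃ := by
      ext p
      simp only [Finset.mem_univ, Finset.mem_union, Finset.mem_singleton, hs₁, hs₃,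
        Finset.mem_filter, true_and, true_iff]
      rcases Nat.lt_trichotomy (idx p) (idx p₀) with hh | hh | hh
      · exact Or.inl (Or.inl hh)
      · exact Or.inl (Or.inr (idx_inj hh))
      · exact Or.inr hh
    unfold codeM
    rw [hu, Finset.sum_union d2, Finset.sum_union d1, Finset.sum_singleton]
  have hS1 : ∑ p ∈ s₁, M p.1 p.2 * (b + 1) ^ (m * n - idx p) = ∑ p ∈ s₁, N p.1 p.2 * (b + 1) ^ (m * n - idx p) := by
    refine Finset.sum_congr rfl (fun p hp => ?_)
    rw [hs₁, Finset.mem_filter] at hp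
    rw [h2 p hp.2]
  have hT : (∑ p ∈ s₃, M p.1 p.2 * (b + 1) ^ (m * n - idx p)) < (b + 1) ^ (m * n - idx p₀) := by
    have hinj : ∀ p ∈ s₃, ∀ p' ∈ s₃, m * n - idx p = m * n - idx p' → p = p' := by
      intro p hp p' hp' he
      have l1 := idx_le_mul p
      have l2 := idx_le_mul p'
      exact idx_inj (by omega)
    have hsub : s₃.image (fun p => m * n - idx p) ⊆ Finset.range (m * n - idx p₀) := by
      intro e he
      obtain ⟨p, hp, rfl⟩ := Finset.mem_image.mp he
      rw [hs₃, Finset.mem_filter] at hp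
      have l1 := idx_le_mul p
      rw [Finset.mem_range]
      omega
    calc ∑ p ∈ s₃, M p.1 p.2 * (b + 1) ^ (m * n - idx p) ≤ ∑ p ∈ s₃, b * (b + 1) ^ (m * n - idx p) :=
          Finset.sum_le_sum fun p _ => Nat.mul_le_mul_right _ (by have := hM p; omega)
      _ = ∑ e ∈ s₃.image (fun p => m * n - idx p), b * (b + 1) ^ e :=
          (Finset.sum_image (f := fun e => b * (b + 1) ^ e) hinj).symm
      _ ≤ ∑ e ∈ Finset.range (m * n - idx p₀), b * (b + 1) ^ e :=
          Finset.sum_le_sum_of_subset hsub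
      _ < (b + 1) ^ (m * n - idx p₀) := by
          have hg := geom_aux b (m * n - idx p₀)
          rw [Finset.mul_sum] at hg
          omega
  have hstep : M p₀.1 p₀.2 * (b + 1) ^ (m * n - idx p₀) + (b + 1) ^ (m * n - idx p₀) ≤ N p₀.1 p₀.2 * (b + 1) ^ (m * n - idx p₀) := by
    have hh : (M p₀.1 p₀.2 + 1) * (b + 1) ^ (m * n - idx p₀) ≤ N p₀.1 p₀.2 * (b + 1) ^ (m * n - idx p₀) :=
      Nat.mul_le_mul_right _ (by omega)
    rw [Nat.succ_mul] at hh
    omega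
  rw [hsplit M, hsplit N, hS1]
  omega

/-! #### The induction measure -/

/-- The measure used for the straightening induction. -/
def muW (w : List (Fin m × Fin n)) : ℕ :=
  codeM (w.length + 1) (matW w) * (w.length ^ 2 + 1) + invN (w.map idx)

lemma matW_swap (u v : List (Fin m × Fin n)) (a b : Fin m × Fin n) :
    matW (u ++ a :: b :: v) = matW (u ++ b :: a :: v) := by
  funext i j
  simp only [matW, List.count_append, List.count_cons]
  ring

lemma muW_swap_lt (u v : List (Fin m × Fin n)) {a b : Fin m × Fin n} (h : idx b < idx a) :
    muW (u ++ b :: a :: v) < muW (u ++ a :: b :: v) := by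
  have hlen : (u ++ b :: a :: v).length = (u ++ a :: b :: v).length := by simp
  have hmat := matW_swap u v a b
  have hinv : invN ((u ++ b :: a :: v).map idx) < invN ((u ++ a :: b :: v).map idx) := by
    simp only [List.map_append, List.map_cons]
    exact invN_swap h (u.map idx) (v.map idx)
  unfold muW
  rw [hlen, ← hmat]
  exact Nat.add_lt_add_left hinv _

lemma matW_err_lt (u v : List (Fin m × Fin n)) {i₁ i₂ : Fin m} {j₁ j₂ : Fin n}
    (hi : i₁.1 < i₂.1) (hj : j₁.1 < j₂.1) :
    MLexLt (matW (u ++ (i₁, j₂) :: (i₂, j₁) :: v)) (matW (u ++ (i₂, j₂) :: (i₁, j₁) :: v)) := by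
  have hne1 : ((i₁, j₂) : Fin m × Fin n) ≠ (i₁, j₁) := by
    simp only [ne_eq, Prod.mk.injEq, Fin.ext_iff]; omega
  have hne2 : ((i₂, j₁) : Fin m × Fin n) ≠ (i₁, j₁) := by
    simp only [ne_eq, Prod.mk.injEq, Fin.ext_iff]; omega
  have hne3 : ((i₂, j₂) : Fin m × Fin n) ≠ (i₁, j₁) := by
    simp only [ne_eq, Prod.mk.injEq, Fin.ext_iff]; omega
  refine ⟨(i₁, j₁), ?_, ?_⟩
  · simp only [matW, List.count_append, List.count_cons]
    simp [hne1, hne2, hne3]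
  · rintro ⟨c, d⟩ hcd
    rw [idx_lt_idx] at hcd
    have k1 : ((i₁, j₂) : Fin m × Fin n) ≠ (c, d) := by
      simp only [ne_eq, Prod.mk.injEq, Fin.ext_iff]
      rcases hcd with hh | ⟨hh1, hh2⟩ <;> omega
    have k2 : ((i₂, j₁) : Fin m × Fin n) ≠ (c, d) := by
      simp only [ne_eq, Prod.mk.injEq, Fin.ext_iff]
      rcases hcd with hh | ⟨hh1, hh2⟩ <;> omega
    have k3 : ((i₂, j₂) : Fin m × Fin n) ≠ (c, d) := by
      simp only [ne_eq, Prod.mk.injEq, Fin.ext_iff]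
      rcases hcd with hh | ⟨hh1, hh2⟩ <;> omega
    have k4 : ((i₁, j₁) : Fin m × Fin n) ≠ (c, d) := by
      simp only [ne_eq, Prod.mk.injEq, Fin.ext_iff]
      rcases hcd with hh | ⟨hh1, hh2⟩ <;> omega
    simp only [matW, List.count_append, List.count_cons]
    simp [k1, k2, k3, k4]

lemma muW_err_lt (u v : List (Fin m × Fin n)) {i₁ i₂ : Fin m} {j₁ j₂ : Fin n}
    (hi : i₁.1 < i₂.1) (hj : j₁.1 < j₂.1) :
    muW (u ++ (i₁, j₂) :: (i₂, j₁) :: v) < muW (u ++ (i₂, j₂) :: (i₁, j₁) :: v) := by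
  have hlen : (u ++ (i₁, j₂) :: (i₂, j₁) :: v).length
      = (u ++ (i₂, j₂) :: (i₁, j₁) :: v).length := by simp
  have hcode : codeM ((u ++ (i₂, j₂) :: (i₁, j₁) :: v).length + 1)
        (matW (u ++ (i₁, j₂) :: (i₂, j₁) :: v))
      < codeM ((u ++ (i₂, j₂) :: (i₁, j₁) :: v).length + 1)
        (matW (u ++ (i₂, j₂) :: (i₁, j₁) :: v)) := by
    refine codeM_lt (fun p => ?_) (matW_err_lt u v hi hj)
    have hc := List.count_le_length (a := (p.1, p.2)) (l := u ++ (i₁, j₂) :: (i₂, j₁) :: v)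
    simp only [matW]
    omega
  have hinv : invN ((u ++ (i₁, j₂) :: (i₂, j₁) :: v).map idx)
      ≤ (u ++ (i₂, j₂) :: (i₁, j₁) :: v).length ^ 2 := by
    have h5 := invN_le_sq ((u ++ (i₁, j₂) :: (i₂, j₁) :: v).map idx)
    rw [List.length_map, hlen] at h5
    exact h5
  have key : ∀ (X Y k1 k2 C : ℕ), X + 1 ≤ Y → k1 < C → X * C + k1 < Y * C + k2 := by
    intro X Y k1 k2 C hXY hk
    calc X * C + k1 < X * C + C := by omega
      _ = (X + 1) * C := by ring
      _ ≤ Y * C := Nat.mul_le_mul_right _ hXY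
      _ ≤ Y * C + k2 := Nat.le_add_right _ _
  unfold muW
  rw [hlen]
  exact key _ _ _ _ _ hcode (by omega)

/-! #### Extracting an adjacent inversion from an unsorted word -/

lemma exists_bad {α : Type*} {R : α → α → Prop} :
    ∀ {w : List α}, ¬ w.Chain' R → ∃ u a b v, w = u ++ a :: b :: v ∧ ¬ R a b
  | [], h => absurd List.isChain_nil h
  | [x], h => absurd (List.isChain_singleton x) h
  | x :: y :: l, h => by
    unfold List.Chain' at h
    rw [List.isChain_cons_cons] at h
    by_cases hxy : R x y
    · have h2 : ¬ List.Chain' R (y :: l) := fun hc => h ⟨hxy, hc⟩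
      obtain ⟨u, a, b, v, heq, hab⟩ := exists_bad h2
      exact ⟨x :: u, a, b, v, by rw [heq]; rfl, hab⟩
    · exact ⟨[], x, y, l, rfl, hxy⟩

/-! #### Products of generators of `R^{(t)}` along words -/

lemma prod_flatMap {M' : Type*} [Monoid M'] {α : Type*} (l : List α) (f : α → List M') :
    (l.flatMap f).prod = (l.map fun a => (f a).prod).prod := by
  induction l with
  | nil => rfl
  | cons a l ih => rw [List.flatMap_cons, List.prod_append, ih, List.map_cons, List.prod_cons]

end Stmt12Aux

/-- The ordered product of the generators of `R^{(t)}` along a word of coordinates. -/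
def prodW (K : Type*) [Field K] (m n : ℕ) (q : K) (t : ℕ) (w : List (Fin m × Fin n)) :
    Rt K m n q t :=
  (w.map fun p => rx K m n q t p.1 p.2).prod

/-- `low` is a sum of lexicographic terms that are all `≺ D`. -/
def LowerT {K : Type*} [Field K] {m n : ℕ} {q : K} {t : ℕ} (D : Matrix (Fin m) (Fin n) ℕ)
    (x : Rt K m n q t) : Prop :=
  ∃ c : Matrix (Fin m) (Fin n) ℕ →₀ K,
    x = c.sum (fun L r => r • rxpow K m n q t L) ∧ ∀ L ∈ c.support, MLexLt L D

section Stmt12Alg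

variable {K : Type*} [Field K] {m n : ℕ} {q : K} {t : ℕ}

lemma prodW_append (w₁ w₂ : List (Fin m × Fin n)) :
    prodW K m n q t (w₁ ++ w₂) = prodW K m n q t w₁ * prodW K m n q t w₂ := by
  simp [prodW]

lemma prodW_split (u v : List (Fin m × Fin n)) (a b : Fin m × Fin n) :
    prodW K m n q t (u ++ a :: b :: v)
      = prodW K m n q t u * (rx K m n q t a.1 a.2 * rx K m n q t b.1 b.2 * prodW K m n q t v) := by
  simp [prodW, mul_assoc]

lemma prodW_wordOf (M : Matrix (Fin m) (Fin n) ℕ) :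
    prodW K m n q t (wordOf M) = rxpow K m n q t M := by
  unfold prodW wordOf rxpow
  rw [List.map_flatMap, prod_flatMap]
  simp [List.map_replicate]

lemma LowerT_zero {D : Matrix (Fin m) (Fin n) ℕ} : LowerT D (0 : Rt K m n q t) :=
  ⟨0, by simp, by simp⟩

lemma LowerT_add {D : Matrix (Fin m) (Fin n) ℕ} {x y : Rt K m n q t}
    (hx : LowerT D x) (hy : LowerT D y) : LowerT D (x + y) := by
  classical
  obtain ⟨c₁, h₁, s₁⟩ := hx
  obtain ⟨c₂, h₂, s₂⟩ := hy
  refine ⟨c₁ + c₂, ?_, ?_⟩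
  · rw [h₁, h₂]
    exact (Finsupp.sum_add_index' (h := fun L r => r • rxpow K m n q t L)
      (fun L => zero_smul K _) (fun L r₁ r₂ => add_smul r₁ r₂ _)).symm
  · intro L hL
    rcases Finset.mem_union.mp (Finsupp.support_add hL) with h | h
    exacts [s₁ L h, s₂ L h]

lemma LowerT_smul {D : Matrix (Fin m) (Fin n) ℕ} {x : Rt K m n q t} (r : K)
    (hx : LowerT D x) : LowerT D (r • x) := by
  obtain ⟨c, hc, hs⟩ := hx
  refine ⟨r • c, ?_, fun L hL => hs L (Finsupp.support_smul hL)⟩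
  have e1 : (r • c).sum (fun L s => s • rxpow K m n q t L)
      = c.sum (fun L s => (r • s) • rxpow K m n q t L) :=
    Finsupp.sum_smul_index' (fun i => zero_smul K _)
  rw [hc, Finsupp.smul_sum, e1]
  exact Finsupp.sum_congr fun L _ => by rw [smul_smul, smul_eq_mul]

lemma LowerT_single {D L : Matrix (Fin m) (Fin n) ℕ} (r : K) (hL : MLexLt L D) :
    LowerT D (r • rxpow K m n q t L) := by
  refine ⟨Finsupp.single L r, ?_, fun L' hL' => by
    have hmem := Finsupp.support_single_subset hL'
    rw [Finset.mem_singleton] at hmem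
    subst hmem; exact hL⟩
  exact (Finsupp.sum_single_index
    (h := fun L r => r • rxpow K m n q t L) (zero_smul K _)).symm

lemma LowerT_mono {D D' : Matrix (Fin m) (Fin n) ℕ} {x : Rt K m n q t}
    (hDD' : MLexLt D D') (hx : LowerT D x) : LowerT D' x :=
  let ⟨c, hc, hs⟩ := hx
  ⟨c, hc, fun L hL => MLexLt_trans (hs L hL) hDD'⟩

/-! #### The defining relations, expressed in terms of the generators `x_{i,j}` -/

lemma rx_rel_row (hq0 : q ≠ 0) {i : Fin m} {j₁ j₂ : Fin n} (h : j₁ < j₂) :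
    rx K m n q t i j₂ * rx K m n q t i j₁
      = (q ^ (-1 : ℤ)) • (rx K m n q t i j₁ * rx K m n q t i j₂) := by
  have h2 := RingQuot.mkAlgHom_rel K (RRel.rowRel (K := K) (m := m) (n := n) (q := q) (t := t) (i := i) h)
  have h1 : rx K m n q t i j₁ * rx K m n q t i j₂
      = q • (rx K m n q t i j₂ * rx K m n q t i j₁) := by
    simpa only [rx, map_mul, map_smul] using h2
  rw [zpow_neg_one, h1, smul_smul, inv_mul_cancel₀ hq0, one_smul]

lemma rx_rel_col (hq0 : q ≠ 0) {i₁ i₂ : Fin m} {j : Fin n} (h : i₁ < i₂) :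
    rx K m n q t i₂ j * rx K m n q t i₁ j
      = (q ^ (-1 : ℤ)) • (rx K m n q t i₁ j * rx K m n q t i₂ j) := by
  have h2 := RingQuot.mkAlgHom_rel K (RRel.colRel (K := K) (m := m) (n := n) (q := q) (t := t) (j := j) h)
  have h1 : rx K m n q t i₁ j * rx K m n q t i₂ j
      = q • (rx K m n q t i₂ j * rx K m n q t i₁ j) := by
    simpa only [rx, map_mul, map_smul] using h2
  rw [zpow_neg_one, h1, smul_smul, inv_mul_cancel₀ hq0, one_smul]

lemma rx_rel_anti {i₁ i₂ : Fin m} {j₁ j₂ : Fin n} (h1 : i₁ < i₂) (h2 : j₂ < j₁) :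
    rx K m n q t i₂ j₂ * rx K m n q t i₁ j₁ = rx K m n q t i₁ j₁ * rx K m n q t i₂ j₂ := by
  have h3 := RingQuot.mkAlgHom_rel K
    (RRel.antiDiag (K := K) (m := m) (n := n) (q := q) (t := t) h1 h2)
  have h4 : rx K m n q t i₁ j₁ * rx K m n q t i₂ j₂
      = rx K m n q t i₂ j₂ * rx K m n q t i₁ j₁ := by
    simpa only [rx, map_mul] using h3
  exact h4.symm

lemma rx_rel_dcomm {i₁ i₂ : Fin m} {j₁ j₂ : Fin n} (h1 : i₁ < i₂) (h2 : j₁ < j₂)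
    (hT : t < idx (i₂, j₂)) :
    rx K m n q t i₂ j₂ * rx K m n q t i₁ j₁ = rx K m n q t i₁ j₁ * rx K m n q t i₂ j₂ := by
  have h3 := RingQuot.mkAlgHom_rel K
    (RRel.diagComm (K := K) (m := m) (n := n) (q := q) (t := t) h1 h2 hT)
  have h4 : rx K m n q t i₁ j₁ * rx K m n q t i₂ j₂
      = rx K m n q t i₂ j₂ * rx K m n q t i₁ j₁ := by
    simpa only [rx, map_mul] using h3
  exact h4.symm

lemma rx_rel_dq {i₁ i₂ : Fin m} {j₁ j₂ : Fin n} (h1 : i₁ < i₂) (h2 : j₁ < j₂)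
    (hT : idx (i₂, j₂) ≤ t) :
    rx K m n q t i₂ j₂ * rx K m n q t i₁ j₁
      = rx K m n q t i₁ j₁ * rx K m n q t i₂ j₂
        - (q - q⁻¹) • (rx K m n q t i₁ j₂ * rx K m n q t i₂ j₁) := by
  have h3 := RingQuot.mkAlgHom_rel K
    (RRel.diagQ (K := K) (m := m) (n := n) (q := q) (t := t) h1 h2 hT)
  have h4 : rx K m n q t i₁ j₁ * rx K m n q t i₂ j₂
      = rx K m n q t i₂ j₂ * rx K m n q t i₁ j₁
        + (q - q⁻¹) • (rx K m n q t i₁ j₂ * rx K m n q t i₂ j₁) := by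
    simpa only [rx, map_mul, map_smul, map_add] using h3
  exact eq_sub_iff_add_eq.mpr h4.symm

/-! #### The straightening step for a commuting/quasi-commuting adjacent pair -/

lemma good_swap (hq0 : q ≠ 0) (u v : List (Fin m × Fin n)) (a b : Fin m × Fin n) (ε : ℤ)
    (hsw : rx K m n q t a.1 a.2 * rx K m n q t b.1 b.2
      = (q ^ ε) • (rx K m n q t b.1 b.2 * rx K m n q t a.1 a.2))
    (h : ∃ (α : ℤ) (low : Rt K m n q t), LowerT (matW (u ++ b :: a :: v)) low ∧
      prodW K m n q t (u ++ b :: a :: v)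
        = (q ^ α) • rxpow K m n q t (matW (u ++ b :: a :: v)) + low) :
    ∃ (α : ℤ) (low : Rt K m n q t), LowerT (matW (u ++ a :: b :: v)) low ∧
      prodW K m n q t (u ++ a :: b :: v)
        = (q ^ α) • rxpow K m n q t (matW (u ++ a :: b :: v)) + low := by
  obtain ⟨α, low, hl, he⟩ := h
  have hm : matW (u ++ a :: b :: v) = matW (u ++ b :: a :: v) := matW_swap u v a b
  refine ⟨ε + α, (q ^ ε) • low, by rw [hm]; exact LowerT_smul _ hl, ?_⟩
  rw [hm]
  calc prodW K m n q t (u ++ a :: b :: v)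
      = prodW K m n q t u * (rx K m n q t a.1 a.2 * rx K m n q t b.1 b.2 * prodW K m n q t v) :=
        prodW_split u v a b
    _ = (q ^ ε) • (prodW K m n q t u
          * (rx K m n q t b.1 b.2 * rx K m n q t a.1 a.2 * prodW K m n q t v)) := by
        rw [hsw, smul_mul_assoc, mul_smul_comm]
    _ = (q ^ ε) • prodW K m n q t (u ++ b :: a :: v) := by rw [← prodW_split]
    _ = (q ^ ε) • ((q ^ α) • rxpow K m n q t (matW (u ++ b :: a :: v)) + low) := by rw [he]
    _ = (q ^ (ε + α)) • rxpow K m n q t (matW (u ++ b :: a :: v)) + (q ^ ε) • low := by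
        rw [smul_add, smul_smul, ← zpow_add₀ hq0]

/-! #### The main straightening theorem for words -/

theorem good_all (hq0 : q ≠ 0) (w : List (Fin m × Fin n)) :
    ∃ (α : ℤ) (low : Rt K m n q t), LowerT (matW w) low ∧
      prodW K m n q t w = (q ^ α) • rxpow K m n q t (matW w) + low := by
  suffices H : ∀ (F : ℕ) (w : List (Fin m × Fin n)), muW w < F →
      ∃ (α : ℤ) (low : Rt K m n q t), LowerT (matW w) low ∧
        prodW K m n q t w = (q ^ α) • rxpow K m n q t (matW w) + low by
    exact H (muW w + 1) w (Nat.lt_succ_self _)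
  intro F
  induction F with
  | zero => intro w hw; omega
  | succ F IH =>
    intro w hw
    by_cases hs : w.Chain' (fun p p' : Fin m × Fin n => idx p ≤ idx p')
    · have hsorted : w.Pairwise (fun p p' => idx p ≤ idx p') := List.isChain_iff_pairwise.mp hs
      refine ⟨0, 0, LowerT_zero, ?_⟩
      rw [zpow_zero, one_smul, add_zero]
      conv_lhs => rw [sorted_eq_wordOf hsorted]
      exact prodW_wordOf (matW w)
    · obtain ⟨u, a, b, v, rfl, hab⟩ := exists_bad hs
      have hba : idx b < idx a := not_le.mp hab
      obtain ⟨i₂, j₂⟩ := a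
      obtain ⟨i₁, j₁⟩ := b
      have hswIH := IH (u ++ (i₁, j₁) :: (i₂, j₂) :: v)
        (by have := muW_swap_lt u v hba; omega)
      rw [idx_lt_idx] at hba
      rcases hba with hi | ⟨hie, hjl⟩
      · rcases Nat.lt_trichotomy j₁.1 j₂.1 with hj | hj | hj
        · -- diagonal pair
          have hi' : i₁ < i₂ := Fin.lt_def.mpr hi
          have hj' : j₁ < j₂ := Fin.lt_def.mpr hj
          by_cases hT : t < idx (i₂, j₂)
          · refine good_swap hq0 u v (i₂, j₂) (i₁, j₁) 0 ?_ hswIH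
            rw [zpow_zero, one_smul]
            exact rx_rel_dcomm hi' hj' hT
          · have hrel := rx_rel_dq (K := K) (q := q) (t := t) hi' hj' (not_lt.mp hT)
            obtain ⟨α₁, low₁, hlow₁, heq₁⟩ := hswIH
            obtain ⟨α₂, low₂, hlow₂, heq₂⟩ := IH (u ++ (i₁, j₂) :: (i₂, j₁) :: v)
              (by have := muW_err_lt u v hi hj; omega)
            have hM2 := matW_err_lt u v hi hj
            have hms : matW (u ++ (i₁, j₁) :: (i₂, j₂) :: v)
                = matW (u ++ (i₂, j₂) :: (i₁, j₁) :: v) := matW_swap u v _ _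
            rw [hms] at hlow₁ heq₁
            refine ⟨α₁, low₁ + (-(q - q⁻¹)) • ((q ^ α₂)
              • rxpow K m n q t (matW (u ++ (i₁, j₂) :: (i₂, j₁) :: v)) + low₂), ?_, ?_⟩
            · exact LowerT_add hlow₁ (LowerT_smul _
                (LowerT_add (LowerT_single _ hM2) (LowerT_mono hM2 hlow₂)))
            · calc prodW K m n q t (u ++ (i₂, j₂) :: (i₁, j₁) :: v)
                  = prodW K m n q t u * (rx K m n q t i₂ j₂ * rx K m n q t i₁ j₁
                      * prodW K m n q t v) := prodW_split u v (i₂, j₂) (i₁, j₁)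
                _ = prodW K m n q t u * ((rx K m n q t i₁ j₁ * rx K m n q t i₂ j₂
                      - (q - q⁻¹) • (rx K m n q t i₁ j₂ * rx K m n q t i₂ j₁))
                      * prodW K m n q t v) := by rw [hrel]
                _ = prodW K m n q t (u ++ (i₁, j₁) :: (i₂, j₂) :: v)
                    - (q - q⁻¹) • prodW K m n q t (u ++ (i₁, j₂) :: (i₂, j₁) :: v) := by
                    rw [prodW_split u v (i₁, j₁) (i₂, j₂), prodW_split u v (i₁, j₂) (i₂, j₁),
                      sub_mul, mul_sub, smul_mul_assoc, mul_smul_comm]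
                _ = (q ^ α₁) • rxpow K m n q t (matW (u ++ (i₂, j₂) :: (i₁, j₁) :: v))
                    + (low₁ + (-(q - q⁻¹)) • ((q ^ α₂)
                      • rxpow K m n q t (matW (u ++ (i₁, j₂) :: (i₂, j₁) :: v)) + low₂)) := by
                    rw [heq₁, heq₂]
                    module
        · -- same column
          have hjj : j₁ = j₂ := Fin.val_injective hj
          subst hjj
          refine good_swap hq0 u v (i₂, j₁) (i₁, j₁) (-1) ?_ hswIH
          exact rx_rel_col hq0 (Fin.lt_def.mpr hi)
        · -- antidiagonal pair
          refine good_swap hq0 u v (i₂, j₂) (i₁, j₁) 0 ?_ hswIH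
          rw [zpow_zero, one_smul]
          exact rx_rel_anti (Fin.lt_def.mpr hi) (Fin.lt_def.mpr hj)
      · -- same row
        have hii : i₁ = i₂ := Fin.val_injective hie
        subst hii
        refine good_swap hq0 u v (i₁, j₂) (i₁, j₁) (-1) ?_ hswIH
        exact rx_rel_row hq0 (Fin.lt_def.mpr hjl)

end Stmt12Alg

/-- Proposition: the lexicographic expression of `x^M x^N` is
`q^α x^{M+N}` plus lexicographically smaller terms; consequently if `x^M` divides `x^N` then
`x^N = q^α x^M x^{N-M}` plus terms `≺ N`. -/
theorem statement_12 (K : Type*) [Field K] [Infinite K] (m n : ℕ) (hm : 2 ≤ m) (hn : 2 ≤ n)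
    (q : K) (hq0 : q ≠ 0) (hq : NotRootOfUnity q) (t : ℕ) (ht1 : 1 ≤ t) (ht2 : t ≤ m * n)
    (M N : Matrix (Fin m) (Fin n) ℕ) :
    (∃ (α : ℤ) (c : Matrix (Fin m) (Fin n) ℕ →₀ K),
      rxpow K m n q t M * rxpow K m n q t N =
        (q ^ α) • rxpow K m n q t (M + N) + c.sum (fun L r => r • rxpow K m n q t L) ∧
      ∀ L ∈ c.support, MLexLt L (M + N)) ∧
    ((∀ p : Fin m × Fin n, M p.1 p.2 ≤ N p.1 p.2) →
      ∃ (α : ℤ) (c : Matrix (Fin m) (Fin n) ℕ →₀ K),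
        rxpow K m n q t N =
          (q ^ α) • (rxpow K m n q t M * rxpow K m n q t (N - M)) +
            c.sum (fun L r => r • rxpow K m n q t L) ∧
        ∀ L ∈ c.support, MLexLt L N) := by
  have part1 : ∀ (M N : Matrix (Fin m) (Fin n) ℕ),
      ∃ (α : ℤ) (c : Matrix (Fin m) (Fin n) ℕ →₀ K),
        rxpow K m n q t M * rxpow K m n q t N =
          (q ^ α) • rxpow K m n q t (M + N) + c.sum (fun L r => r • rxpow K m n q t L) ∧
        ∀ L ∈ c.support, MLexLt L (M + N) := by
    intro M N
    obtain ⟨α, low, hlow, heq⟩ := good_all (q := q) (t := t) hq0 (wordOf M ++ wordOf N)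
    have hm : matW (wordOf M ++ wordOf N) = M + N := by
      funext i j
      simp only [matW, List.count_append]
      have c1 := count_wordOf M (i, j)
      have c2 := count_wordOf N (i, j)
      rw [c1, c2, Matrix.add_apply]
    rw [hm] at hlow heq
    rw [prodW_append, prodW_wordOf, prodW_wordOf] at heq
    obtain ⟨c, hc, hsupp⟩ := hlow
    rw [hc] at heq
    exact ⟨α, c, heq, hsupp⟩
  constructor
  · exact part1 M N
  · intro hle
    obtain ⟨α, low, hlow, heq⟩ := good_all (q := q) (t := t) hq0 (wordOf M ++ wordOf (N - M))
    have hm : matW (wordOf M ++ wordOf (N - M)) = N := by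
      funext i j
      simp only [matW, List.count_append]
      have c1 := count_wordOf M (i, j)
      have c2 := count_wordOf (N - M) (i, j)
      rw [c1, c2]
      have hle' := hle (i, j)
      simp only [Matrix.sub_apply] at *
      omega
    rw [hm] at hlow heq
    rw [prodW_append, prodW_wordOf, prodW_wordOf] at heq
    have hlow2 := LowerT_smul (-(q ^ (-α : ℤ))) hlow
    obtain ⟨c', hc', hsupp'⟩ := hlow2
    refine ⟨-α, c', ?_, hsupp'⟩
    rw [← hc']
    have key : (q ^ (-α : ℤ)) • ((q ^ (α : ℤ)) • rxpow K m n q t N) = rxpow K m n q t N := by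
      rw [smul_smul, ← zpow_add₀ hq0]
      simp
    rw [heq, smul_add, key]
    module

end QM

end
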